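/- Let 0 < β₀ < β₁ < 2. Then there exist constants C̃ > 0 and C̄ > 0 (depending only on β₀ and β₁) such that for every β ∈ [β₀, β₁] and every real z ≥ 0 one has (C̃/β)·exp(z^{1/β}) ≤ E_{β,1}(z) ≤ (C̄/β)·exp(z^{1/β}). -/

import Mathlib

open Real Nat

/-- The Mittag-Leffler function `E_{β,γ}(z) = ∑_{k=0}^∞ z^k / Γ(βk + γ)` for real `z`. -/
noncomputable def mittagLeffler (β γ z : ℝ) : ℝ :=
  ∑' k : ℕ, z ^ k / Real.Gamma (β * k + γ)

lemma gamma_interp {a b θ κ : ℝ} (ha : 0 < a) (hb : 0 < b) (hθ : 0 ≤ θ) (hκ : 0 ≤ κ)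
    (hs : θ + κ = 1) :
    Real.Gamma (θ * a + κ * b) ≤ Real.Gamma a ^ θ * Real.Gamma b ^ κ := by
  have hc : 0 < θ * a + κ * b := by
    rcases eq_or_lt_of_le hθ with h0 | h0
    · have hκ1 : κ = 1 := by linarith
      rw [← h0, hκ1]; simpa using hb
    · have h1 : 0 ≤ κ * b := mul_nonneg hκ hb.le
      have h2 : 0 < θ * a := mul_pos h0 ha
      linarith
  have h := Real.convexOn_log_Gamma.2 (Set.mem_Ioi.2 ha) (Set.mem_Ioi.2 hb) hθ hκ hs
  simp only [Function.comp_apply, smul_eq_mul] at h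
  have hga := Real.Gamma_pos_of_pos ha
  have hgb := Real.Gamma_pos_of_pos hb
  have hgc := Real.Gamma_pos_of_pos hc
  calc Real.Gamma (θ * a + κ * b) = Real.exp (Real.log (Real.Gamma (θ*a+κ*b))) :=
        (Real.exp_log hgc).symm
    _ ≤ Real.exp (θ * Real.log (Real.Gamma a) + κ * Real.log (Real.Gamma b)) :=
        Real.exp_le_exp.2 h
    _ = Real.Gamma a ^ θ * Real.Gamma b ^ κ := by
        rw [Real.exp_add, Real.rpow_def_of_pos hga, Real.rpow_def_of_pos hgb,
          mul_comm θ, mul_comm κ]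

-- Lemma U
lemma termU {x t : ℝ} (hx : 0 < x) (ht : 0 ≤ t) :
    x ^ t / Real.Gamma (t + 1) ≤
      2 * (x ^ (⌊t⌋₊) / ((⌊t⌋₊)! : ℝ) + x ^ (⌊t⌋₊ + 1) / ((⌊t⌋₊ + 1)! : ℝ)) := by
  set n : ℕ := ⌊t⌋₊ with hn
  have hns : (n : ℝ) ≤ t := Nat.floor_le ht
  have hts : t < n + 1 := Nat.lt_floor_add_one t
  set s : ℝ := t - n with hs
  have hs0 : 0 ≤ s := by simp [hs]; linarith
  have hs1 : s < 1 := by simp [hs]; linarith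
  have ht1 : (0:ℝ) < t + 1 := by linarith
  have ht2 : (0:ℝ) < t + 2 := by linarith
  have hg1 : 0 < Real.Gamma (t + 1) := Real.Gamma_pos_of_pos ht1
  -- Gamma lower bound : (n+1)! ≤ Gamma(t+1) * (t+1)^(1-s)
  have key : ((n+1)! : ℝ) ≤ Real.Gamma (t+1) * (t+1) ^ (1-s) := by
    have hcomb : s * (t+1) + (1-s) * (t+2) = (n:ℝ) + 2 := by
      rw [hs]; ring
    have h := gamma_interp ht1 ht2 hs0 (by linarith : (0:ℝ) ≤ 1 - s) (by ring)
    rw [hcomb] at h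
    have hfact : Real.Gamma ((n:ℝ) + 2) = ((n+1)! : ℝ) := by
      have := Real.Gamma_nat_eq_factorial (n+1)
      push_cast at this ⊢
      rw [show (n:ℝ) + 2 = ((n:ℝ)+1) + 1 by ring]
      exact this
    have hadd : Real.Gamma (t + 2) = (t+1) * Real.Gamma (t+1) := by
      rw [show t + 2 = (t+1) + 1 by ring, Real.Gamma_add_one ht1.ne']
    rw [hfact, hadd] at h
    calc ((n+1)! : ℝ) ≤ Real.Gamma (t+1) ^ s * ((t+1) * Real.Gamma (t+1)) ^ (1-s) := h
      _ = Real.Gamma (t+1) * (t+1) ^ (1-s) := by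
          rw [Real.mul_rpow ht1.le hg1.le, ← mul_assoc,
            mul_comm (Real.Gamma (t+1) ^ s), mul_assoc, mul_comm (Real.Gamma (t+1) ^ s),
            ← Real.rpow_add hg1, show 1 - s + s = 1 by ring, Real.rpow_one, mul_comm]
    -- goal shape fix
  have step1 : x ^ t / Real.Gamma (t+1) ≤ x ^ t * (t+1) ^ (1-s) / ((n+1)! : ℝ) := by
    rw [div_le_div_iff₀ hg1 (by positivity)]
    have hxt : (0:ℝ) ≤ x ^ t := (Real.rpow_pos_of_pos hx t).le
    calc x ^ t * ((n+1)! : ℝ) ≤ x ^ t * (Real.Gamma (t+1) * (t+1) ^ (1-s)) :=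
          mul_le_mul_of_nonneg_left key hxt
      _ = x ^ t * (t+1) ^ (1-s) * Real.Gamma (t+1) := by ring
  have hA : (0:ℝ) ≤ x ^ n / (n ! : ℝ) := by positivity
  have hB : (0:ℝ) ≤ x ^ (n+1) / ((n+1)! : ℝ) := by positivity
  rcases le_or_gt (t+1) x with hcase | hcase
  · -- x ≥ t+1 : bound by x^(n+1)/(n+1)!
    have h2 : x ^ t * (t+1) ^ (1-s) ≤ x ^ ((n:ℝ)+1) := by
      calc x ^ t * (t+1) ^ (1-s) ≤ x ^ t * x ^ (1-s) :=
            mul_le_mul_of_nonneg_left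
              (Real.rpow_le_rpow ht1.le hcase (by linarith)) (Real.rpow_pos_of_pos hx t).le
        _ = x ^ (t + (1-s)) := (Real.rpow_add hx _ _).symm
        _ = x ^ ((n:ℝ)+1) := by rw [hs]; ring_nf
    have h3 : x ^ ((n:ℝ)+1) = x ^ (n+1) := by
      rw [show ((n:ℝ)+1) = ((n+1 : ℕ) : ℝ) by push_cast; ring, Real.rpow_natCast]
    have : x ^ t / Real.Gamma (t+1) ≤ x ^ (n+1) / ((n+1)! : ℝ) := by
      refine le_trans step1 ?_
      rw [← h3]
      exact div_le_div_of_nonneg_right h2 (by positivity)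
    linarith
  · -- x < t+1 : bound by 2 * x^n/n!
    have hxs : x ^ s ≤ (t+1) ^ s := Real.rpow_le_rpow hx.le hcase.le hs0
    have hxt : x ^ t = x ^ (n:ℝ) * x ^ s := by
      rw [← Real.rpow_add hx, hs]; ring_nf
    have h2 : x ^ t * (t+1) ^ (1-s) ≤ x ^ (n:ℝ) * (t+1) := by
      calc x ^ t * (t+1) ^ (1-s) = x ^ (n:ℝ) * (x ^ s * (t+1) ^ (1-s)) := by
            rw [hxt]; ring
        _ ≤ x ^ (n:ℝ) * ((t+1) ^ s * (t+1) ^ (1-s)) := by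
            refine mul_le_mul_of_nonneg_left ?_ (Real.rpow_pos_of_pos hx _).le
            exact mul_le_mul_of_nonneg_right hxs (Real.rpow_nonneg ht1.le _)
        _ = x ^ (n:ℝ) * (t+1) := by
            rw [← Real.rpow_add ht1, show s + (1-s) = 1 by ring, Real.rpow_one]
    have h3 : x ^ (n:ℝ) = x ^ n := Real.rpow_natCast x n
    have h4 : x ^ (n:ℝ) * (t+1) / ((n+1)! : ℝ) ≤ 2 * (x ^ n / (n ! : ℝ)) := by
      rw [h3]
      have hfact : ((n+1)! : ℝ) = (n+1) * (n ! : ℝ) := by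
        push_cast [Nat.factorial_succ]; ring
      rw [hfact]
      rw [div_le_iff₀ (by positivity)]
      have hxn : (0:ℝ) ≤ x ^ n := by positivity
      have hnf : (0:ℝ) < (n ! : ℝ) := by positivity
      have ht2n : t + 1 ≤ 2 * (n+1) := by
        have h0n : (0:ℝ) ≤ (n:ℝ) := Nat.cast_nonneg n
        linarith
      calc x ^ n * (t+1) ≤ x ^ n * (2 * ((n:ℝ)+1)) := mul_le_mul_of_nonneg_left ht2n hxn
        _ = 2 * (x ^ n / (n ! : ℝ)) * (((n:ℝ)+1) * (n ! : ℝ)) := by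
            field_simp
    have : x ^ t / Real.Gamma (t+1) ≤ 2 * (x ^ n / (n ! : ℝ)) := by
      refine le_trans step1 (le_trans ?_ h4)
      exact div_le_div_of_nonneg_right h2 (by positivity)
    linarith

lemma termL {x t : ℝ} (hx : 0 < x) {m : ℕ} (h1 : 2*(m:ℝ) ≤ t) (h2 : t ≤ 2*(m:ℝ) + 2) :
    min (x ^ (2*m) / ((2*m)! : ℝ)) (x ^ (2*m+2) / ((2*m+2)! : ℝ)) ≤
      x ^ t / Real.Gamma (t + 1) := by
  set s : ℝ := t - 2*(m:ℝ) with hs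
  have hs0 : 0 ≤ s := by simp [hs]; linarith
  have hs2 : s ≤ 2 := by simp [hs]; linarith
  have ht0 : 0 ≤ t := by
    have : (0:ℝ) ≤ 2*(m:ℝ) := by positivity
    linarith
  have ht1 : (0:ℝ) < t + 1 := by linarith
  have hg1 : 0 < Real.Gamma (t+1) := Real.Gamma_pos_of_pos ht1
  set P : ℝ := (2*(m:ℝ)+1) * (2*(m:ℝ)+2) with hP
  have hPpos : 0 < P := by positivity
  have hfac2 : ((2*m+2)! : ℝ) = ((2*m)! : ℝ) * P := by
    have e1 : (2*m+2) = (2*m+1) + 1 := by ring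
    rw [e1, Nat.factorial_succ, Nat.factorial_succ]
    push_cast
    rw [hP]; ring
  -- Gamma upper bound
  have key : Real.Gamma (t+1) ≤ ((2*m)! : ℝ) * P ^ (s/2) := by
    have ha : (0:ℝ) < 2*(m:ℝ)+1 := by positivity
    have hb : (0:ℝ) < 2*(m:ℝ)+3 := by positivity
    have hcomb : (1 - s/2) * (2*(m:ℝ)+1) + (s/2) * (2*(m:ℝ)+3) = t + 1 := by
      rw [hs]; ring
    have h := gamma_interp ha hb (by linarith : (0:ℝ) ≤ 1 - s/2)
      (by linarith : (0:ℝ) ≤ s/2) (by ring)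
    rw [hcomb] at h
    have hga : Real.Gamma (2*(m:ℝ)+1) = ((2*m)! : ℝ) := by
      rw [show 2*(m:ℝ)+1 = ((2*m : ℕ):ℝ)+1 by push_cast; ring]
      exact Real.Gamma_nat_eq_factorial (2*m)
    have hgb : Real.Gamma (2*(m:ℝ)+3) = ((2*m+2)! : ℝ) := by
      rw [show 2*(m:ℝ)+3 = ((2*m+2 : ℕ):ℝ)+1 by push_cast; ring]
      exact Real.Gamma_nat_eq_factorial (2*m+2)
    rw [hga, hgb, hfac2] at h
    have hfpos : (0:ℝ) < ((2*m)! : ℝ) := by positivity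
    calc Real.Gamma (t+1) ≤ ((2*m)! : ℝ) ^ (1-s/2) * (((2*m)! : ℝ) * P) ^ (s/2) := h
      _ = ((2*m)! : ℝ) * P ^ (s/2) := by
          rw [Real.mul_rpow hfpos.le hPpos.le, ← mul_assoc, ← Real.rpow_add hfpos,
            show 1 - s/2 + s/2 = 1 by ring, Real.rpow_one]
  have step1 : x ^ t / (((2*m)! : ℝ) * P ^ (s/2)) ≤ x ^ t / Real.Gamma (t+1) := by
    apply div_le_div_of_nonneg_left (Real.rpow_pos_of_pos hx t).le hg1 key
  -- rewrite LHS
  have hxt : x ^ t = x ^ (2*m) * x ^ s := by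
    rw [← Real.rpow_natCast x (2*m), ← Real.rpow_add hx]
    congr 1
    push_cast
    rw [hs]; ring
  have hratio : x ^ s / P ^ (s/2) = (x^2 / P) ^ (s/2) := by
    rw [Real.div_rpow (by positivity) hPpos.le, ← Real.rpow_natCast x 2,
      ← Real.rpow_mul hx.le, show ((2:ℕ):ℝ) * (s/2) = s by push_cast; ring]
  have lhs_eq : x ^ t / (((2*m)! : ℝ) * P ^ (s/2)) =
      (x ^ (2*m) / ((2*m)! : ℝ)) * ((x^2/P) ^ (s/2)) := by
    rw [hxt, ← hratio]
    field_simp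
  refine le_trans ?_ step1
  rw [lhs_eq]
  have hApos : (0:ℝ) < x ^ (2*m) / ((2*m)! : ℝ) := by positivity
  rcases le_or_gt P (x^2) with hc | hc
  · -- ratio ≥ 1, min ≤ first
    have hone : (1:ℝ) ≤ (x^2/P) ^ (s/2) := by
      apply Real.one_le_rpow ?_ (by linarith)
      rw [le_div_iff₀ hPpos]; linarith
    calc min (x ^ (2*m) / ((2*m)! : ℝ)) (x ^ (2*m+2) / ((2*m+2)! : ℝ))
        ≤ x ^ (2*m) / ((2*m)! : ℝ) := min_le_left _ _
      _ ≤ (x ^ (2*m) / ((2*m)! : ℝ)) * ((x^2/P) ^ (s/2)) :=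
          le_mul_of_one_le_right hApos.le hone
  · -- ratio ≥ x^2/P
    have hbase : 0 < x^2/P := by positivity
    have hbase1 : x^2/P ≤ 1 := by
      rw [div_le_one hPpos]; linarith
    have hge : (x^2/P) ^ (1:ℝ) ≤ (x^2/P) ^ (s/2) :=
      Real.rpow_le_rpow_of_exponent_ge hbase hbase1 (by linarith)
    rw [Real.rpow_one] at hge
    calc min (x ^ (2*m) / ((2*m)! : ℝ)) (x ^ (2*m+2) / ((2*m+2)! : ℝ))
        ≤ x ^ (2*m+2) / ((2*m+2)! : ℝ) := min_le_right _ _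
      _ = (x ^ (2*m) / ((2*m)! : ℝ)) * (x^2/P) := by
          rw [hfac2, pow_add]
          field_simp
      _ ≤ (x ^ (2*m) / ((2*m)! : ℝ)) * ((x^2/P) ^ (s/2)) :=
          mul_le_mul_of_nonneg_left hge hApos.le

lemma exp_eq_tsum' (x : ℝ) : Real.exp x = ∑' n : ℕ, x ^ n / (n ! : ℝ) := by
  rw [Real.exp_eq_exp_ℝ, NormedSpace.exp_eq_tsum_div]

lemma summable_aa (x : ℝ) : Summable (fun n : ℕ => x ^ n / (n ! : ℝ)) :=
  Real.summable_pow_div_factorial x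

-- Lemma M : max term bound
lemma maxterm {x : ℝ} (hx : 1 ≤ x) (n : ℕ) : x ^ n / (n ! : ℝ) ≤ (5/11) * Real.exp x := by
  have hx0 : (0:ℝ) < x := by linarith
  rcases Nat.eq_zero_or_pos n with rfl | hn
  · simp only [pow_zero, Nat.factorial_zero, Nat.cast_one, div_one]
    have h1 : Real.exp 1 ≤ Real.exp x := Real.exp_le_exp.2 hx
    have h2 : (2.7182818283 : ℝ) < Real.exp 1 := Real.exp_one_gt_d9
    nlinarith
  · obtain ⟨m, rfl⟩ : ∃ m, n = m + 1 := ⟨n - 1, (Nat.succ_pred_eq_of_pos hn).symm⟩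
    set aa : ℕ → ℝ := fun j => x ^ j / (j ! : ℝ) with haa
    have hpos : ∀ j, 0 < aa j := fun j => by positivity
    have hsum3 : aa m + aa (m+1) + aa (m+2) ≤ Real.exp x := by
      have h := Summable.sum_le_tsum ({m, m+1, m+2} : Finset ℕ)
        (fun j _ => (hpos j).le) (summable_aa x)
      rw [← exp_eq_tsum'] at h
      have hs : ∑ j ∈ ({m, m+1, m+2} : Finset ℕ), aa j = aa m + aa (m+1) + aa (m+2) := by
        rw [Finset.sum_insert (by simp), Finset.sum_insert (by simp), Finset.sum_singleton]
        ring
      rw [← hs]; exact h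
    -- ratios
    have e1 : aa m * x = aa (m+1) * ((m:ℝ)+1) := by
      simp only [haa, Nat.factorial_succ]
      push_cast
      field_simp
      ring
    have e2 : aa (m+1) * x = aa (m+2) * ((m:ℝ)+2) := by
      simp only [haa, show m+2 = (m+1)+1 from rfl, Nat.factorial_succ]
      push_cast
      field_simp
      ring
    have key : (11/5 : ℝ) * aa (m+1) ≤ aa m + aa (m+1) + aa (m+2) := by
      have h0 := hpos m
      have h1 := hpos (m+1)
      have h2 := hpos (m+2)
      have hm0 : (0:ℝ) ≤ (m:ℝ) := Nat.cast_nonneg m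
      have hq : (0:ℝ) < (m:ℝ) + 2 := by linarith
      have hxq : (0:ℝ) < x * ((m:ℝ)+2) := mul_pos hx0 hq
      have expand : (aa m + aa (m+2) - 6/5 * aa (m+1)) * (x * ((m:ℝ)+2)) =
          aa (m+1) * (((m:ℝ)+1)*((m:ℝ)+2) + x^2 - 6/5*x*((m:ℝ)+2)) := by
        linear_combination ((m:ℝ)+2) * e1 - x * e2
      have scalar : (0:ℝ) ≤ ((m:ℝ)+1)*((m:ℝ)+2) + x^2 - 6/5*x*((m:ℝ)+2) := by
        nlinarith [sq_nonneg (5*((m:ℝ)+2) - 6*x), mul_nonneg hm0 hq.le, sq_nonneg x]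
      have hprod : (0:ℝ) ≤ (aa m + aa (m+2) - 6/5 * aa (m+1)) * (x * ((m:ℝ)+2)) := by
        rw [expand]; exact mul_nonneg h1.le scalar
      have := (mul_nonneg_iff_of_pos_right hxq).1 hprod
      linarith
    calc aa (m+1) = (5/11) * ((11/5) * aa (m+1)) := by ring
      _ ≤ (5/11) * (aa m + aa (m+1) + aa (m+2)) := by linarith
      _ ≤ (5/11) * Real.exp x := by linarith

lemma summable_even (x : ℝ) : Summable (fun m : ℕ => x ^ (2*m) / ((2*m)! : ℝ)) :=
  (Real.hasSum_cosh x).summable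

lemma even_sum_ge {x : ℝ} (hx : 0 ≤ x) :
    Real.exp x / 2 ≤ ∑' m : ℕ, x ^ (2*m) / ((2*m)! : ℝ) := by
  rw [← Real.cosh_eq_tsum, Real.cosh_eq]
  have := Real.exp_pos (-x)
  linarith

-- the b-sum lower bound
lemma bsum_ge {x : ℝ} (hx : 1 ≤ x) :
    Real.exp x / 22 ≤
      ∑' m : ℕ, min (x ^ (2*m) / ((2*m)! : ℝ)) (x ^ (2*m+2) / ((2*m+2)! : ℝ)) := by
  have hx0 : (0:ℝ) < x := by linarith
  set g : ℕ → ℝ := fun m => x ^ (2*m) / ((2*m)! : ℝ) with hg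
  set b : ℕ → ℝ := fun m => min (g m) (g (m+1)) with hb
  have hbeq : (fun m : ℕ => min (x ^ (2*m) / ((2*m)! : ℝ)) (x ^ (2*m+2) / ((2*m+2)! : ℝ))) = b := by
    funext m
    simp only [hb, hg]
    congr 3 <;> ring_nf
  rw [hbeq]
  have hgpos : ∀ m, 0 < g m := fun m => by positivity
  have hgsum : Summable g := summable_even x
  have hbsum : Summable b := by
    apply Summable.of_nonneg_of_le (fun m => le_min (hgpos m).le (hgpos (m+1)).le)
      (fun m => min_le_left _ _) hgsum
  -- ratio : g (m+1) = g m * x^2 / ((2m+1)(2m+2))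
  have hratio : ∀ m : ℕ, g (m+1) * ((2*(m:ℝ)+1) * (2*(m:ℝ)+2)) = g m * x^2 := by
    intro m
    simp only [hg]
    have e1 : 2*(m+1) = (2*m+1)+1 := by ring
    rw [e1, Nat.factorial_succ, Nat.factorial_succ, pow_succ, pow_succ]
    push_cast
    field_simp
    ring
  -- existence of m0
  have hex : ∃ m : ℕ, x^2 < (2*(m:ℝ)+1) * (2*(m:ℝ)+2) := by
    obtain ⟨m, hm⟩ := exists_nat_gt (x^2)
    exact ⟨m, by nlinarith [Nat.cast_nonneg (α := ℝ) m]⟩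
  classical
  set m0 := Nat.find hex with hm0
  have hP0 := Nat.find_spec hex
  -- for m < m0 : b m = g m
  have hlt : ∀ m < m0, b m = g m := by
    intro m hm
    have hnot := Nat.find_min hex hm
    push_neg at hnot
    have : g m ≤ g (m+1) := by
      have h := hratio m
      have hq : (0:ℝ) < (2*(m:ℝ)+1) * (2*(m:ℝ)+2) := by positivity
      rw [← mul_le_mul_iff_left₀ hq]
      calc g m * ((2*(m:ℝ)+1) * (2*(m:ℝ)+2)) ≤ g m * x^2 := by
            exact mul_le_mul_of_nonneg_left hnot (hgpos m).le
        _ = g (m+1) * ((2*(m:ℝ)+1) * (2*(m:ℝ)+2)) := h.symm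
    simp only [hb]
    exact min_eq_left this
  -- for m ≥ m0 : b m = g (m+1)
  have hge : ∀ m, b (m + m0) = g (m + m0 + 1) := by
    intro m
    have hmono : x^2 < (2*((m+m0:ℕ):ℝ)+1) * (2*((m+m0:ℕ):ℝ)+2) := by
      have h1 : (m0:ℝ) ≤ ((m+m0:ℕ):ℝ) := by push_cast; linarith [Nat.cast_nonneg (α := ℝ) m]
      nlinarith [Nat.cast_nonneg (α := ℝ) m0]
    have : g ((m+m0)+1) ≤ g (m+m0) := by
      have h := hratio (m+m0)
      have hq : (0:ℝ) < (2*((m+m0:ℕ):ℝ)+1) * (2*((m+m0:ℕ):ℝ)+2) := by positivity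
      rw [← mul_le_mul_iff_left₀ hq]
      calc g ((m+m0)+1) * ((2*((m+m0:ℕ):ℝ)+1) * (2*((m+m0:ℕ):ℝ)+2)) = g (m+m0) * x^2 := h
        _ ≤ g (m+m0) * ((2*((m+m0:ℕ):ℝ)+1) * (2*((m+m0:ℕ):ℝ)+2)) :=
            mul_le_mul_of_nonneg_left hmono.le (hgpos _).le
    simp only [hb]
    exact min_eq_right this
  -- split the tsum
  have hsplit := (Summable.sum_add_tsum_nat_add m0 hbsum).symm
  have t1 : ∑ m ∈ Finset.range m0, b m = ∑ m ∈ Finset.range m0, g m :=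
    Finset.sum_congr rfl (fun m hm => hlt m (Finset.mem_range.1 hm))
  have t2 : ∑' m : ℕ, b (m + m0) = ∑' m : ℕ, g (m + (m0+1)) := by
    apply tsum_congr
    intro m
    rw [hge m]
    exact congrArg g (Nat.add_assoc m m0 1)
  have t3 : ∑' m : ℕ, g (m + (m0+1)) = (∑' m, g m) - ∑ m ∈ Finset.range (m0+1), g m := by
    have := Summable.sum_add_tsum_nat_add (m0+1) hgsum
    linarith
  have t4 : ∑ m ∈ Finset.range (m0+1), g m = ∑ m ∈ Finset.range m0, g m + g m0 :=
    Finset.sum_range_succ g m0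
  have hgm0 : g m0 ≤ (5/11) * Real.exp x := maxterm hx (2*m0)
  have heven : Real.exp x / 2 ≤ ∑' m, g m := by
    have h : Real.exp x / 2 ≤ ∑' m : ℕ, x ^ (2*m) / ((2*m)! : ℝ) := by
      rw [← Real.cosh_eq_tsum, Real.cosh_eq]
      have := Real.exp_pos (-x)
      linarith
    exact h
  have : ∑' m, b m = (∑' m, g m) - g m0 := by
    rw [hsplit, t1, t2, t3, t4]; ring
  rw [this]
  have : Real.exp x / 2 - (5/11) * Real.exp x = Real.exp x / 22 := by ring
  linarith

lemma sum_range_decomp (f : ℕ → ℝ) (d : ℕ → ℕ) (hd : Monotone d) (h0 : d 0 = 0) (N : ℕ) :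
    ∑ k ∈ Finset.range (d N), f k = ∑ n ∈ Finset.range N, ∑ k ∈ Finset.Ico (d n) (d (n+1)), f k := by
  induction N with
  | zero => simp [h0]
  | succ N ih =>
      rw [Finset.sum_range_succ, ← ih, Finset.range_eq_Ico, Finset.range_eq_Ico]
      exact (Finset.sum_Ico_consecutive f (Nat.zero_le (d N)) (hd (Nat.le_succ N))).symm

section main
variable {β β₁ x : ℝ} (hβ : 0 < β) (hββ : β ≤ β₁) (hβ2 : β₁ < 2) (hx : 0 < x)

-- partial sums of the ML-series in terms of x are bounded
lemma partial_sum_le (hβ : 0 < β) (hββ : β ≤ β₁) (hβ2 : β₁ < 2) (hx : 0 < x) (K : ℕ) :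
    ∑ k ∈ Finset.range K, x ^ (β * k) / Real.Gamma (β * k + 1) ≤
      (4 * (1 + β₁) / β) * Real.exp x := by
  set f : ℕ → ℝ := fun k => x ^ (β * k) / Real.Gamma (β * k + 1) with hf
  have hfpos : ∀ k, 0 ≤ f k := by
    intro k
    have h1 : (0:ℝ) < β * k + 1 := by positivity
    have := Real.Gamma_pos_of_pos h1
    positivity
  set c : ℕ → ℕ := fun n => ⌈(n:ℝ)/β⌉₊ with hc
  have hcmono : Monotone c := by
    intro a b hab
    apply Nat.ceil_le_ceil
    apply div_le_div_of_nonneg_right (by exact_mod_cast hab) hβ.le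
  have hc0 : c 0 = 0 := by simp [hc]
  -- K ≤ c (2K)
  have hKc : K ≤ c (2*K) := by
    have h1 : (K:ℝ) ≤ (2*K : ℕ)/β := by
      push_cast
      rw [le_div_iff₀ hβ]
      nlinarith [Nat.cast_nonneg (α := ℝ) K]
    calc K = ⌈(K:ℝ)⌉₊ := by simp
      _ ≤ c (2*K) := Nat.ceil_le_ceil h1
  have step : ∀ k, 0 ≤ f k := hfpos
  have hmono : ∑ k ∈ Finset.range K, f k ≤ ∑ k ∈ Finset.range (c (2*K)), f k :=
    Finset.sum_le_sum_of_subset_of_nonneg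
      (Finset.range_subset_range.2 hKc) (fun k _ _ => hfpos k)
  rw [sum_range_decomp f c hcmono hc0 (2*K)] at hmono
  refine le_trans hmono ?_
  -- bound each block
  have block : ∀ n : ℕ, ∑ k ∈ Finset.Ico (c n) (c (n+1)), f k ≤
      (1/β + 1) * (2 * (x ^ n / (n ! : ℝ) + x ^ (n+1) / ((n+1)! : ℝ))) := by
    intro n
    have hbound : ∀ k ∈ Finset.Ico (c n) (c (n+1)), f k ≤
        2 * (x ^ n / (n ! : ℝ) + x ^ (n+1) / ((n+1)! : ℝ)) := by
      intro k hk
      rw [Finset.mem_Ico] at hk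
      have hkn : (n:ℝ) ≤ β * k := by
        have := Nat.le_ceil ((n:ℝ)/β)
        have h2 : ((n:ℝ)/β) ≤ (k:ℝ) := le_trans this (by exact_mod_cast hk.1)
        rw [div_le_iff₀ hβ] at h2
        linarith [h2]
      have hkn1 : β * k < (n:ℝ) + 1 := by
        by_contra h
        push_neg at h
        have h2 : ((n+1:ℕ):ℝ)/β ≤ (k:ℝ) := by
          rw [div_le_iff₀ hβ]
          push_cast
          nlinarith
        have h3 : c (n+1) ≤ k := Nat.ceil_le.2 h2
        exact absurd hk.2 (not_lt.2 h3)
      have hfloor : ⌊β * (k:ℝ)⌋₊ = n := by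
        rw [Nat.floor_eq_iff (by positivity)]
        exact ⟨hkn, hkn1⟩
      have := termU hx (by positivity : (0:ℝ) ≤ β * k)
      rw [hfloor] at this
      exact this
    have hcard : ((Finset.Ico (c n) (c (n+1))).card : ℝ) ≤ 1/β + 1 := by
      rw [Nat.card_Ico]
      have h1 : (c (n+1) : ℝ) < ((n+1:ℕ):ℝ)/β + 1 := Nat.ceil_lt_add_one (by positivity)
      have h2 : ((n:ℝ))/β ≤ c n := Nat.le_ceil _
      have h4 : ((c (n+1) - c n : ℕ) : ℝ) ≤ (c (n+1) : ℝ) - (c n : ℝ) := by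
        rw [Nat.cast_sub (hcmono (Nat.le_succ n))]
      have h5 : ((n+1:ℕ):ℝ)/β - (n:ℝ)/β = 1/β := by
        push_cast; field_simp; ring
      linarith [h4, h1, h2, h5]
    calc ∑ k ∈ Finset.Ico (c n) (c (n+1)), f k ≤
          ((Finset.Ico (c n) (c (n+1))).card : ℝ) *
            (2 * (x ^ n / (n ! : ℝ) + x ^ (n+1) / ((n+1)! : ℝ))) := by
          have := Finset.sum_le_card_nsmul _ _ _ hbound
          simpa [nsmul_eq_mul] using this
      _ ≤ (1/β + 1) * (2 * (x ^ n / (n ! : ℝ) + x ^ (n+1) / ((n+1)! : ℝ))) := by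
          apply mul_le_mul_of_nonneg_right hcard
          positivity
  refine le_trans (Finset.sum_le_sum (fun n _ => block n)) ?_
  rw [← Finset.mul_sum]
  have hsums : ∑ n ∈ Finset.range (2*K),
      (2 * (x ^ n / (n ! : ℝ) + x ^ (n+1) / ((n+1)! : ℝ))) ≤ 4 * Real.exp x := by
    have e1 : ∑ n ∈ Finset.range (2*K), x ^ n / (n ! : ℝ) ≤ Real.exp x := by
      rw [exp_eq_tsum']
      exact Summable.sum_le_tsum _ (fun n _ => by positivity) (Real.summable_pow_div_factorial x)
    have e2 : ∑ n ∈ Finset.range (2*K), x ^ (n+1) / ((n+1)! : ℝ) ≤ Real.exp x := by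
      have : ∑ n ∈ Finset.range (2*K), x ^ (n+1) / ((n+1)! : ℝ) ≤
          ∑ n ∈ Finset.range (2*K+1), x ^ n / (n ! : ℝ) := by
        rw [Finset.sum_range_succ']
        have : (0:ℝ) ≤ x ^ 0 / (0! : ℝ) := by positivity
        simpa using le_add_of_nonneg_right this
      refine le_trans this ?_
      rw [exp_eq_tsum']
      exact Summable.sum_le_tsum _ (fun n _ => by positivity) (Real.summable_pow_div_factorial x)
    rw [Finset.sum_congr rfl (fun n _ => by ring : ∀ n ∈ Finset.range (2*K),
      2 * (x ^ n / (n ! : ℝ) + x ^ (n+1) / ((n+1)! : ℝ)) =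
      2 * (x ^ n / (n ! : ℝ)) + 2 * (x ^ (n+1) / ((n+1)! : ℝ))), Finset.sum_add_distrib,
      ← Finset.mul_sum, ← Finset.mul_sum]
    linarith
  calc (1/β + 1) * ∑ n ∈ Finset.range (2*K),
        (2 * (x ^ n / (n ! : ℝ) + x ^ (n+1) / ((n+1)! : ℝ)))
      ≤ (1/β + 1) * (4 * Real.exp x) := by
        apply mul_le_mul_of_nonneg_left hsums
        positivity
    _ ≤ (4 * (1 + β₁) / β) * Real.exp x := by
        have hexp : (0:ℝ) < Real.exp x := Real.exp_pos x
        have h1 : 1/β + 1 ≤ (1 + β₁)/β := by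
          rw [div_add' _ _ _ hβ.ne', div_le_div_iff₀ hβ hβ]
          nlinarith
        have h2 := mul_le_mul_of_nonneg_right h1
          (le_of_lt (by positivity : (0:ℝ) < 4*Real.exp x))
        have h3 : 4*(1+β₁)/β*Real.exp x = (1+β₁)/β*(4*Real.exp x) := by ring
        linarith [h2]
end main

lemma tsum_lower {β β₁ x : ℝ} (hβ : 0 < β) (hββ : β ≤ β₁) (hβ2 : β₁ < 2) (hx1 : 1 ≤ x)
    (hsum : Summable (fun k : ℕ => x ^ (β * k) / Real.Gamma (β * k + 1))) :
    ((2 - β₁)/β) * (Real.exp x / 22) ≤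
      ∑' k : ℕ, x ^ (β * k) / Real.Gamma (β * k + 1) := by
  have hx : (0:ℝ) < x := by linarith
  set f : ℕ → ℝ := fun k => x ^ (β * k) / Real.Gamma (β * k + 1) with hf
  have hfpos : ∀ k, 0 ≤ f k := by
    intro k
    have h1 : (0:ℝ) < β * k + 1 := by positivity
    have := Real.Gamma_pos_of_pos h1
    positivity
  set b : ℕ → ℝ := fun m => min (x ^ (2*m) / ((2*m)! : ℝ)) (x ^ (2*m+2) / ((2*m+2)! : ℝ))
    with hb
  have hbpos : ∀ m, 0 < b m := fun m => lt_min (by positivity) (by positivity)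
  have hbsum : Summable b :=
    Summable.of_nonneg_of_le (fun m => (hbpos m).le) (fun m => min_le_left _ _)
      ((Real.hasSum_cosh x).summable)
  set d : ℕ → ℕ := fun n => ⌈(2*n:ℝ)/β⌉₊ with hd
  have hdmono : Monotone d := by
    intro a b hab
    apply Nat.ceil_le_ceil
    apply div_le_div_of_nonneg_right (by exact_mod_cast Nat.mul_le_mul_left 2 hab) hβ.le
  have hd0 : d 0 = 0 := by simp [hd]
  have hcoef : (0:ℝ) ≤ (2 - β₁)/β := by
    apply div_nonneg (by linarith) hβ.le
  -- block bound
  have block : ∀ m : ℕ, ((2 - β₁)/β) * b m ≤ ∑ k ∈ Finset.Ico (d m) (d (m+1)), f k := by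
    intro m
    have hterm : ∀ k ∈ Finset.Ico (d m) (d (m+1)), b m ≤ f k := by
      intro k hk
      rw [Finset.mem_Ico] at hk
      have hkm : 2*(m:ℝ) ≤ β * k := by
        have h3 := hk.1
        simp only [hd] at h3
        have h1 : 2*(m:ℝ)/β ≤ (k:ℝ) := le_trans (Nat.le_ceil _) (Nat.cast_le.2 h3)
        rw [div_le_iff₀ hβ] at h1
        nlinarith
      have hkm2 : β * k ≤ 2*(m:ℝ) + 2 := by
        by_contra h
        push_neg at h
        have h2 : ((2*(m+1):ℝ))/β ≤ (k:ℝ) := by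
          rw [div_le_iff₀ hβ]
          push_cast
          nlinarith
        have h3 : d (m+1) ≤ k := by
          simp only [hd]
          apply Nat.ceil_le.2
          push_cast at h2 ⊢
          linarith
        exact absurd hk.2 (not_lt.2 h3)
      exact termL hx hkm hkm2
    have hcard : (2 - β₁)/β ≤ ((Finset.Ico (d m) (d (m+1))).card : ℝ) := by
      rw [Nat.card_Ico, Nat.cast_sub (hdmono (Nat.le_succ m))]
      have h1 : (d m : ℝ) < (2*m:ℝ)/β + 1 := Nat.ceil_lt_add_one (by positivity)
      have h2 : ((2*(m+1):ℝ))/β ≤ (d (m+1) : ℝ) := by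
        have := Nat.le_ceil ((2*((m:ℝ)+1))/β)
        have he : d (m+1) = ⌈(2*((m:ℝ)+1))/β⌉₊ := by
          simp only [hd]
          congr 1
          push_cast
          ring
        rw [he]
        exact this
      have h3 : (2*((m:ℝ)+1))/β - (2*(m:ℝ))/β = 2/β := by
        field_simp
        ring
      have h4 : (2 - β₁)/β ≤ 2/β - 1 := by
        rw [div_sub' hβ.ne', div_le_div_iff₀ hβ hβ]
        nlinarith
      linarith
    calc ((2 - β₁)/β) * b m ≤ ((Finset.Ico (d m) (d (m+1))).card : ℝ) * b m :=
          mul_le_mul_of_nonneg_right hcard (hbpos m).le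
      _ ≤ ∑ k ∈ Finset.Ico (d m) (d (m+1)), f k := by
          have hcs : (Finset.Ico (d m) (d (m+1))).card • b m ≤
              ∑ k ∈ Finset.Ico (d m) (d (m+1)), f k :=
            Finset.card_nsmul_le_sum _ _ _ hterm
          rw [nsmul_eq_mul] at hcs
          exact hcs
  -- partial sums
  have hpartial : ∀ M : ℕ, ((2 - β₁)/β) * ∑ m ∈ Finset.range M, b m ≤ ∑' k, f k := by
    intro M
    have h1 : ∑ k ∈ Finset.range (d M), f k ≤ ∑' k, f k :=
      Summable.sum_le_tsum _ (fun k _ => hfpos k) hsum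
    rw [sum_range_decomp f d hdmono hd0 M] at h1
    refine le_trans ?_ h1
    rw [Finset.mul_sum]
    exact Finset.sum_le_sum (fun m _ => block m)
  -- limit
  have htends : Filter.Tendsto (fun M => ((2 - β₁)/β) * ∑ m ∈ Finset.range M, b m)
      Filter.atTop (nhds (((2 - β₁)/β) * ∑' m, b m)) :=
    (hbsum.hasSum.tendsto_sum_nat).const_mul _
  have hle : ((2 - β₁)/β) * ∑' m, b m ≤ ∑' k, f k :=
    le_of_tendsto htends (Filter.Eventually.of_forall hpartial)
  refine le_trans ?_ hle
  exact mul_le_mul_of_nonneg_left (bsum_ge hx1) hcoef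

theorem mittagLeffler_one_bounds (β₀ β₁ : ℝ) (hβ₀ : 0 < β₀) (hβ₀₁ : β₀ < β₁) (hβ₁ : β₁ < 2) :
    ∃ Ctilde Cbar : ℝ, 0 < Ctilde ∧ 0 < Cbar ∧
      ∀ β ∈ Set.Icc β₀ β₁, ∀ z : ℝ, 0 ≤ z →
        (Ctilde / β) * Real.exp (z ^ (1 / β)) ≤ mittagLeffler β 1 z ∧
        mittagLeffler β 1 z ≤ (Cbar / β) * Real.exp (z ^ (1 / β)) := by
  refine ⟨min ((2 - β₁)/22) (β₀/3), 4*(1+β₁), ?_, by nlinarith, ?_⟩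
  · apply lt_min (by linarith) (by linarith)
  intro β hβmem z hz
  obtain ⟨hβl, hβr⟩ := hβmem
  have hβ : 0 < β := lt_of_lt_of_le hβ₀ hβl
  have hCb : β ≤ 4*(1+β₁) := by nlinarith
  rcases eq_or_lt_of_le hz with hz0 | hz0
  · -- z = 0
    rw [← hz0]
    have hML : mittagLeffler β 1 0 = 1 := by
      unfold mittagLeffler
      rw [tsum_eq_single 0 (by
        intro k hk
        rw [zero_pow hk, zero_div])]
      norm_num [Real.Gamma_one]
    have hrp : (0:ℝ) ^ ((1:ℝ)/β) = 0 := Real.zero_rpow (by positivity)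
    rw [hML, hrp, Real.exp_zero, mul_one, mul_one]
    constructor
    · have h1 : min ((2 - β₁)/22) (β₀/3) ≤ β₀/3 := min_le_right _ _
      rw [div_le_one hβ]
      linarith
    · rw [le_div_iff₀ hβ]
      linarith
  · -- z > 0
    set x := z ^ ((1:ℝ)/β) with hxdef
    have hx : 0 < x := Real.rpow_pos_of_pos hz0 _
    have hzx : ∀ k : ℕ, z ^ k / Real.Gamma (β*k+1) = x ^ (β*k) / Real.Gamma (β*k+1) := by
      intro k
      congr 1
      rw [hxdef, ← Real.rpow_natCast z k, ← Real.rpow_mul hz]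
      congr 1
      field_simp
    have hML : mittagLeffler β 1 z = ∑' k : ℕ, x ^ (β*k) / Real.Gamma (β*k+1) := by
      unfold mittagLeffler
      exact tsum_congr hzx
    have hfpos : ∀ k : ℕ, 0 ≤ x ^ (β*k) / Real.Gamma (β*k+1) := by
      intro k
      have h1 : (0:ℝ) < β * k + 1 := by positivity
      have := Real.Gamma_pos_of_pos h1
      positivity
    have hsum : Summable (fun k : ℕ => x ^ (β*k)/Real.Gamma (β*k+1)) :=
      summable_of_sum_range_le hfpos (partial_sum_le hβ hβr hβ₁ hx)
    constructor
    · -- lower bound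
      rcases le_or_gt 1 x with hx1 | hx1
      · have hlow := tsum_lower hβ hβr hβ₁ hx1 hsum
        rw [hML]
        refine le_trans ?_ hlow
        have heq : ((2-β₁)/β)*(Real.exp x/22) = (((2-β₁)/22)/β)*Real.exp x := by ring
        rw [heq]
        apply mul_le_mul_of_nonneg_right _ (Real.exp_pos x).le
        apply div_le_div_of_nonneg_right (min_le_left _ _) hβ.le
      · -- x < 1 : series ≥ 1
        rw [hML]
        have h0 : x ^ (β*((0:ℕ):ℝ)) / Real.Gamma (β*((0:ℕ):ℝ)+1) = 1 := by
          norm_num [Real.Gamma_one, Real.rpow_zero]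
        have hge1 : (1:ℝ) ≤ ∑' k : ℕ, x ^ (β*k)/Real.Gamma (β*k+1) := by
          have := Summable.le_tsum hsum 0 (fun j _ => hfpos j)
          rw [h0] at this
          exact this
        have hexp3 : Real.exp x ≤ 3 := by
          have h1 := Real.exp_one_lt_d9
          have h2 : Real.exp x ≤ Real.exp 1 := Real.exp_le_exp.2 hx1.le
          linarith
        have hC : min ((2-β₁)/22) (β₀/3) ≤ β₀/3 := min_le_right _ _
        have hCpos : (0:ℝ) < min ((2-β₁)/22) (β₀/3) :=
          lt_min (by linarith) (by linarith)
        calc (min ((2-β₁)/22) (β₀/3) / β) * Real.exp x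
            ≤ ((β₀/3) / β) * 3 := by
              apply mul_le_mul (div_le_div_of_nonneg_right hC hβ.le) hexp3
                (Real.exp_pos x).le (by positivity)
          _ = β₀/β := by field_simp
          _ ≤ 1 := by
              rw [div_le_one hβ]
              linarith
          _ ≤ ∑' k : ℕ, x ^ (β*k)/Real.Gamma (β*k+1) := hge1
    · -- upper bound
      rw [hML]
      exact Real.tsum_le_of_sum_range_le hfpos (partial_sum_le hβ hβr hβ₁ hx)
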